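/- In any 1D assigned crease pattern in which every suspicious interval is innocent, there exists either a crimpable segment or an end-foldable segment. -/
import Mathlib


open Finset

/-- A 1D crease pattern: paper `[0, L]` with creases `c 0 < c 1 < ⋯ < c (n-1)`
strictly inside the paper. -/
structure CreasePattern1D where
  L : ℝ
  n : ℕ
  c : Fin n → ℝ
  mono : StrictMono c
  pos : ∀ i, 0 < c i
  lt_len : ∀ i, c i < L

namespace CreasePattern1D

variable (P : CreasePattern1D)

/-- The folded-state map: `f x = x` on the first segment, and the slope flips
sign at every crease (alternating reflection). -/
noncomputable def foldMap (x : ℝ) : ℝ :=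
  (-1 : ℝ) ^ ((univ.filter fun i => P.c i ≤ x)).card * x
    + 2 * ∑ i ∈ univ.filter (fun i => P.c i ≤ x), (-1 : ℝ) ^ (i : ℕ) * P.c i

/-- Vertex `j` of the pattern: `pt 0 = 0` (left end), `pt (j) = c (j-1)` for
`1 ≤ j ≤ n`, and `pt j = L` (right end) for `j ≥ n+1`. -/
noncomputable def pt (j : ℕ) : ℝ :=
  if j = 0 then 0 else if h : j - 1 < P.n then P.c ⟨j - 1, h⟩ else P.L

/-- The interval between creases `p ≤ q` is *suspicious* if the folded images of
the far endpoints of its two flaps both lie strictly outside the folded image of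
the interval. -/
def Suspicious (p q : Fin P.n) : Prop :=
  p ≤ q ∧
  P.foldMap (P.pt (p : ℕ)) ∉ P.foldMap '' Set.Icc (P.c p) (P.c q) ∧
  P.foldMap (P.pt ((q : ℕ) + 2)) ∉ P.foldMap '' Set.Icc (P.c p) (P.c q)

/-- Number of mountain creases in the closed interval `[c p, c q]`
(`a i = true` means crease `i` is a mountain). -/
def countM (a : Fin P.n → Bool) (p q : Fin P.n) : ℕ :=
  ((univ : Finset (Fin P.n)).filter fun i => p ≤ i ∧ i ≤ q ∧ a i = true).card

/-- Number of valley creases in the closed interval `[c p, c q]`. -/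
def countV (a : Fin P.n → Bool) (p q : Fin P.n) : ℕ :=
  ((univ : Finset (Fin P.n)).filter fun i => p ≤ i ∧ i ≤ q ∧ a i = false).card

/-- An interval is *innocent* if its mountain and valley counts differ by at
most one. -/
def Innocent (a : Fin P.n → Bool) (p q : Fin P.n) : Prop :=
  (P.countM a p q : ℤ) - P.countV a p q ≤ 1 ∧
  (P.countV a p q : ℤ) - P.countM a p q ≤ 1

/-- Every suspicious interval is innocent. -/
def AllInnocent (a : Fin P.n → Bool) : Prop :=
  ∀ p q : Fin P.n, P.Suspicious p q → P.Innocent a p q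

end CreasePattern1D

namespace CreasePattern1D

variable (P : CreasePattern1D)

/-- The segment between the consecutive creases `c i` and `c (i+1)` is
*crimpable* if the two creases have opposite assignments and the segment is
nonstrictly shorter than both of its neighboring segments (its flaps). -/
def Crimpable (a : Fin P.n → Bool) (i : Fin P.n) : Prop :=
  ∃ h : (i : ℕ) + 1 < P.n,
    a i ≠ a ⟨(i : ℕ) + 1, h⟩ ∧
    P.c ⟨(i : ℕ) + 1, h⟩ - P.c i ≤ P.c i - P.pt (i : ℕ) ∧
    P.c ⟨(i : ℕ) + 1, h⟩ - P.c i ≤ P.pt ((i : ℕ) + 3) - P.c ⟨(i : ℕ) + 1, h⟩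

/-- The leftmost segment `[0, c 0]` is *end-foldable*: it is nonstrictly
shorter than the following segment. -/
def EndFoldableLeft : Prop :=
  ∃ h : 0 < P.n, P.c ⟨0, h⟩ - 0 ≤ P.pt 2 - P.c ⟨0, h⟩

/-- The rightmost segment `[c (n-1), L]` is *end-foldable*: it is nonstrictly
shorter than the preceding segment. -/
def EndFoldableRight : Prop :=
  ∃ h : 0 < P.n,
    P.L - P.c ⟨P.n - 1, by omega⟩ ≤ P.c ⟨P.n - 1, by omega⟩ - P.pt (P.n - 1)

/-- Some end segment is end-foldable. -/
def EndFoldable : Prop := P.EndFoldableLeft ∨ P.EndFoldableRight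

end CreasePattern1D

namespace CreasePattern1D

variable (P : CreasePattern1D)

lemma pt_zero : P.pt 0 = 0 := by simp [pt]

lemma pt_succ (j : ℕ) (h : j < P.n) : P.pt (j + 1) = P.c ⟨j, h⟩ := by
  simp [pt, h]

lemma pt_top (j : ℕ) (h : P.n + 1 ≤ j) : P.pt j = P.L := by
  have h0 : j ≠ 0 := by omega
  have h1 : ¬ (j - 1 < P.n) := by omega
  simp [pt, h0, h1]

noncomputable def S (j : ℕ) : ℝ :=
  2 * ∑ i ∈ univ.filter (fun i : Fin P.n => (i : ℕ) < j), (-1 : ℝ) ^ (i : ℕ) * P.c i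

lemma card_filter_lt (j : ℕ) (hj : j ≤ P.n) :
    (univ.filter (fun i : Fin P.n => (i : ℕ) < j)).card = j := by
  have himg : (univ.filter (fun i : Fin P.n => (i : ℕ) < j)).image Fin.val
      = Finset.range j := by
    ext k
    simp only [Finset.mem_image, Finset.mem_filter, Finset.mem_univ, true_and,
      Finset.mem_range]
    constructor
    · rintro ⟨i, hi, rfl⟩; exact hi
    · intro hk; exact ⟨⟨k, lt_of_lt_of_le hk hj⟩, hk, rfl⟩
  rw [← Finset.card_image_of_injective _ Fin.val_injective, himg, Finset.card_range]

lemma S_succ (j : ℕ) (h : j < P.n) :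
    P.S (j + 1) = P.S j + 2 * ((-1 : ℝ) ^ j * P.c ⟨j, h⟩) := by
  unfold S
  have hins : univ.filter (fun i : Fin P.n => (i : ℕ) < j + 1)
      = insert ⟨j, h⟩ (univ.filter (fun i : Fin P.n => (i : ℕ) < j)) := by
    ext i
    simp only [Finset.mem_filter, Finset.mem_univ, true_and, Finset.mem_insert]
    constructor
    · intro hi
      rcases Nat.lt_succ_iff_lt_or_eq.mp hi with h' | h'
      · exact Or.inr h'
      · exact Or.inl (Fin.ext h')
    · rintro (rfl | h')
      · simp
      · omega
  rw [hins, Finset.sum_insert (by simp)]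
  ring

lemma fold_eq (j : ℕ) (hj : j ≤ P.n) (x : ℝ)
    (hiff : ∀ i : Fin P.n, P.c i ≤ x ↔ (i : ℕ) < j) :
    P.foldMap x = (-1 : ℝ) ^ j * x + P.S j := by
  unfold foldMap S
  have hf : univ.filter (fun i : Fin P.n => P.c i ≤ x)
      = univ.filter (fun i : Fin P.n => (i : ℕ) < j) := by
    apply Finset.filter_congr; intro i _; simp [hiff i]
  rw [hf, P.card_filter_lt j hj]


lemma pt_pred (j : ℕ) (h0 : 0 < j) (h : j - 1 < P.n) : P.pt j = P.c ⟨j - 1, h⟩ := by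
  have e : j - 1 + 1 = j := by omega
  have := P.pt_succ (j - 1) h
  rwa [e] at this

lemma pt_le_succ (j : ℕ) (hj : j ≤ P.n) (hn : 0 < P.n) : P.pt j ≤ P.pt (j + 1) := by
  rcases Nat.eq_zero_or_pos j with rfl | hj0
  · rw [P.pt_zero, P.pt_succ 0 hn]
    exact (P.pos _).le
  · rcases eq_or_lt_of_le hj with he | hlt
    · rw [he, P.pt_top (P.n + 1) (by omega), P.pt_pred P.n hn (by omega)]
      exact (P.lt_len _).le
    · rw [P.pt_succ j hlt, P.pt_pred j hj0 (by omega)]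
      exact P.mono.monotone (by simp [Fin.le_def])

lemma fold_on_seg (j : ℕ) (hj : j ≤ P.n) (x : ℝ)
    (h1 : P.pt j ≤ x) (h2 : x ≤ P.pt (j + 1)) :
    P.foldMap x = (-1 : ℝ) ^ j * x + P.S j := by
  rcases lt_or_eq_of_le hj with hlt | heq
  · have hpt : P.pt (j + 1) = P.c ⟨j, hlt⟩ := P.pt_succ j hlt
    rcases lt_or_eq_of_le h2 with hx | hx
    · apply P.fold_eq j hj x
      intro i
      constructor
      · intro hci
        by_contra hge
        push_neg at hge
        have hle : P.c ⟨j, hlt⟩ ≤ P.c i := P.mono.monotone (Fin.le_def.mpr hge)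
        rw [hpt] at hx
        linarith
      · intro hij
        have hj0 : 0 < j := by omega
        have hji : j - 1 < P.n := by omega
        have hci : P.c i ≤ P.c ⟨j - 1, hji⟩ := P.mono.monotone (Fin.le_def.mpr (by simp; omega))
        have hptj : P.pt j = P.c ⟨j - 1, hji⟩ := P.pt_pred j hj0 hji
        linarith
    · have hx' : x = P.c ⟨j, hlt⟩ := by rw [← hpt, hx]
      have hfe := P.fold_eq (j + 1) hlt x ?_
      · rw [hfe, P.S_succ j hlt, hx']
        ring
      · intro i
        rw [hx', P.mono.le_iff_le]
        simp [Fin.le_def, Nat.lt_succ_iff]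
  · apply P.fold_eq j hj x
    intro i
    have hilt : (i : ℕ) < j := by omega
    simp only [hilt, iff_true]
    have hn : 0 < j := by omega
    have hjn : j - 1 < P.n := by omega
    have hle : P.c i ≤ P.c ⟨j - 1, hjn⟩ := P.mono.monotone (Fin.le_def.mpr (by simp; omega))
    have hptn : P.pt j = P.c ⟨j - 1, hjn⟩ := P.pt_pred j hn hjn
    linarith

lemma fold_step (j : ℕ) (hj : j ≤ P.n) (hn : 0 < P.n) :
    P.foldMap (P.pt (j + 1)) = P.foldMap (P.pt j) + (-1 : ℝ) ^ j * (P.pt (j + 1) - P.pt j) := by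
  have hle : P.pt j ≤ P.pt (j + 1) := P.pt_le_succ j hj hn
  rw [P.fold_on_seg j hj (P.pt j) le_rfl hle, P.fold_on_seg j hj (P.pt (j + 1)) hle le_rfl]
  ring

end CreasePattern1D

/-- In any (nonempty) 1D assigned crease pattern in which
every suspicious interval is innocent, there is a crimpable segment or an
end-foldable segment. -/
theorem exists_crimp_or_endfold (P : CreasePattern1D) (a : Fin P.n → Bool)
    (hn : 0 < P.n) (h : P.AllInnocent a) :
    (∃ i : Fin P.n, P.Crimpable a i) ∨ P.EndFoldable := by
  classical
  by_cases hEF : P.EndFoldable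
  · exact Or.inr hEF
  left
  rw [CreasePattern1D.EndFoldable, CreasePattern1D.EndFoldableLeft,
    CreasePattern1D.EndFoldableRight] at hEF
  push_neg at hEF
  obtain ⟨hL, hR⟩ := hEF
  have hL' := hL hn
  have hR' := hR hn
  by_cases hn1 : P.n = 1
  · exfalso
    have h2 : P.pt 2 = P.L := P.pt_top 2 (by omega)
    have e1 : (⟨P.n - 1, by omega⟩ : Fin P.n) = ⟨0, hn⟩ := Fin.ext (by simp [hn1])
    have e2 : P.n - 1 = 0 := by omega
    rw [e1, e2, P.pt_zero] at hR'
    rw [h2] at hL'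
    linarith
  have hn2 : 2 ≤ P.n := by omega
  -- segment lengths: d i = length of segment between crease i and crease i+1
  set d : ℕ → ℝ := fun i => P.pt (i + 2) - P.pt (i + 1) with hd
  have hne : (Finset.range (P.n - 1)).Nonempty := ⟨0, Finset.mem_range.mpr (by omega)⟩
  set m : ℝ := (Finset.range (P.n - 1)).inf' hne d with hm
  have hmle : ∀ i, i < P.n - 1 → m ≤ d i :=
    fun i hi => Finset.inf'_le d (Finset.mem_range.mpr hi)
  obtain ⟨i0, hi0mem, hi0⟩ := Finset.exists_mem_eq_inf' hne d
  have hPex : ∃ p, p < P.n - 1 ∧ d p = m := ⟨i0, Finset.mem_range.mp hi0mem, hi0.symm⟩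
  set p := Nat.find hPex with hp
  obtain ⟨hplt, hpd⟩ := Nat.find_spec hPex
  have hpmin : ∀ r, r < p → m < d r := by
    intro r hr
    have h1 := Nat.find_min hPex hr
    have h2 : r < P.n - 1 := by omega
    rcases (hmle r h2).lt_or_eq with h' | h'
    · exact h'
    · exact absurd ⟨h2, h'.symm⟩ h1
  have hQex : ∃ k, ¬(p + k < P.n - 1 ∧ d (p + k) = m) :=
    ⟨P.n, fun hc => absurd hc.1 (by omega)⟩
  set k := Nat.find hQex with hk
  have hkspec := Nat.find_spec hQex
  have hk1 : 0 < k := (Nat.find_pos hQex).mpr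
    (not_not.mpr ⟨by omega, by rwa [Nat.add_zero]⟩)
  have hblock : ∀ j, p ≤ j → j < p + k → j < P.n - 1 ∧ d j = m := by
    intro j h1 h2
    have hmin := Nat.find_min hQex (m := j - p) (by omega)
    rw [not_not] at hmin
    have e : p + (j - p) = j := by omega
    rwa [e] at hmin
  set q := p + k with hq
  have hq1 : p < q := by omega
  have hqn : q ≤ P.n - 1 := by
    have := (hblock (q - 1) (by omega) (by omega)).1
    omega
  have hqspec : q = P.n - 1 ∨ (q < P.n - 1 ∧ m < d q) := by
    rcases eq_or_lt_of_le hqn with h' | h'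
    · exact Or.inl h'
    · refine Or.inr ⟨h', ?_⟩
      have hne'' : d q ≠ m := fun he => hkspec ⟨h', he⟩
      rcases (hmle q h').lt_or_eq with hlt | he
      · exact hlt
      · exact absurd he.symm hne''
  have hpn : p < P.n := by omega
  have hqn' : q < P.n := by omega
  have hm0 : 0 < m := by
    rw [← hpd]
    have h1 : P.pt (p + 1) = P.c ⟨p, hpn⟩ := P.pt_succ p hpn
    have h2 : P.pt (p + 2) = P.c ⟨p + 1, by omega⟩ := P.pt_succ (p + 1) (by omega)
    have h3 : P.c ⟨p, hpn⟩ < P.c ⟨p + 1, by omega⟩ := P.mono (by simp [Fin.lt_def])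
    simp only [hd]
    rw [h1, h2]
    linarith
  -- left flap strictly longer than m
  have hL2 : m < P.pt (p + 1) - P.pt p := by
    rcases Nat.eq_zero_or_pos p with hp0 | hp0
    · have h1 : P.pt 1 = P.c ⟨0, hn⟩ := P.pt_succ 0 hn
      have hd0 : m ≤ d 0 := hmle 0 (by omega)
      have hd0' : d 0 = P.pt 2 - P.pt 1 := by simp [hd]
      rw [hp0, P.pt_zero]
      rw [h1] at hd0' ⊢
      linarith
    · have hb : m < d (p - 1) := hpmin (p - 1) (by omega)
      have e1 : p - 1 + 2 = p + 1 := by omega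
      have e2 : p - 1 + 1 = p := by omega
      simp only [hd] at hb
      rwa [e1, e2] at hb
  -- right flap strictly longer than m
  have hR2 : m < P.pt (q + 2) - P.pt (q + 1) := by
    rcases hqspec with hq' | ⟨hq', hdq⟩
    · have e1 : P.pt (q + 2) = P.L := P.pt_top _ (by omega)
      have e2 : P.pt (q + 1) = P.c ⟨P.n - 1, by omega⟩ := by
        have e : q + 1 = (P.n - 1) + 1 := by omega
        rw [e, P.pt_succ (P.n - 1) (by omega)]
      have hd2 : m ≤ d (P.n - 2) := hmle (P.n - 2) (by omega)
      have e3 : P.n - 2 + 2 = P.n := by omega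
      have e4 : P.n - 2 + 1 = P.n - 1 := by omega
      have hd2' : d (P.n - 2) = P.pt P.n - P.pt (P.n - 1) := by
        simp only [hd]; rw [e3, e4]
      have e5 : P.pt P.n = P.c ⟨P.n - 1, by omega⟩ := P.pt_pred P.n (by omega) (by omega)
      rw [e1, e2]
      rw [hd2', e5] at hd2
      linarith
    · simpa [hd] using hdq
  by_cases hcr : ∃ j, p ≤ j ∧ j < q ∧ ∃ (h1 : j < P.n) (h2 : j + 1 < P.n),
      a ⟨j, h1⟩ ≠ a ⟨j + 1, h2⟩
  · -- a crimpable segment inside the block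
    obtain ⟨j, hj1, hj2, h1, h2, hja⟩ := hcr
    refine ⟨⟨j, h1⟩, h2, hja, ?_, ?_⟩
    · -- c (j+1) - c j ≤ c j - pt j
      simp only [Fin.val_mk]
      have hcj : P.c ⟨j, h1⟩ = P.pt (j + 1) := (P.pt_succ j h1).symm
      have hcj1 : P.c ⟨j + 1, h2⟩ = P.pt (j + 2) := (P.pt_succ (j + 1) h2).symm
      have hdj : d j = m := (hblock j hj1 hj2).2
      simp only [hd] at hdj
      rw [hcj, hcj1, hdj]
      rcases eq_or_lt_of_le hj1 with heq | hpj
      · rw [← heq]; linarith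
      · have hdj1 := (hblock (j - 1) (by omega) (by omega)).2
        simp only [hd] at hdj1
        have e1 : j - 1 + 2 = j + 1 := by omega
        have e2 : j - 1 + 1 = j := by omega
        rw [e1, e2] at hdj1
        linarith
    · -- c (j+1) - c j ≤ pt (j+3) - c (j+1)
      simp only [Fin.val_mk]
      have hcj : P.c ⟨j, h1⟩ = P.pt (j + 1) := (P.pt_succ j h1).symm
      have hcj1 : P.c ⟨j + 1, h2⟩ = P.pt (j + 2) := (P.pt_succ (j + 1) h2).symm
      have hdj : d j = m := (hblock j hj1 hj2).2
      simp only [hd] at hdj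
      rw [hcj, hcj1, hdj]
      by_cases hjq : j + 1 < q
      · have hdj1 := (hblock (j + 1) (by omega) hjq).2
        simp only [hd] at hdj1
        linarith
      · have heq : j + 1 = q := by omega
        rw [← heq] at hR2
        linarith
  · -- all creases in the block have the same assignment: contradiction
    push_neg at hcr
    exfalso
    have hsame : ∀ r, p ≤ r → r ≤ q → ∀ hh : r < P.n, a ⟨r, hh⟩ = a ⟨p, hpn⟩ := by
      intro r
      induction r with
      | zero =>
        intro h1 h2 hh
        have e : (⟨0, hh⟩ : Fin P.n) = ⟨p, hpn⟩ := Fin.ext (by simp; omega)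
        rw [e]
      | succ r ih =>
        intro h1 h2 hh
        rcases eq_or_lt_of_le h1 with he | hlt
        · have e : (⟨r + 1, hh⟩ : Fin P.n) = ⟨p, hpn⟩ := Fin.ext (by simp; omega)
          rw [e]
        · have h1' : p ≤ r := by omega
          have hstep := hcr r h1' (by omega) (by omega) hh
          rw [← hstep]
          exact ih h1' (by omega) (by omega)
    -- key fold values along the block
    have hsne : ((-1 : ℝ)) ^ (p + 1) ≠ 0 := pow_ne_zero _ (by norm_num)
    have hC1 : ∀ r, p ≤ r → r ≤ q →
        P.foldMap (P.pt (r + 1)) = P.foldMap (P.pt (p + 1))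
          + (-1 : ℝ) ^ (p + 1) * (m * (((r - p) % 2 : ℕ) : ℝ)) := by
      intro r hr1
      induction r, hr1 using Nat.le_induction with
      | base => intro _; simp
      | succ r hpr ih =>
        intro hr2
        have ihh := ih (by omega)
        have hstep := P.fold_step (r + 1) (by omega) hn
        have hdr : P.pt (r + 2) - P.pt (r + 1) = m := by
          have := (hblock r hpr (by omega)).2
          simpa [hd] using this
        rw [hdr, ihh] at hstep
        rw [hstep]
        have hpow : ((-1 : ℝ)) ^ (r + 1) = (-1 : ℝ) ^ (p + 1) * (-1 : ℝ) ^ (r - p) := by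
          rw [← pow_add]; congr 1; omega
        rcases Nat.even_or_odd (r - p) with he | ho
        · have e1 : ((-1 : ℝ)) ^ (r - p) = 1 := he.neg_one_pow
          have e2 : (r - p) % 2 = 0 := Nat.even_iff.mp he
          have e3 : (r + 1 - p) % 2 = 1 := by omega
          rw [hpow, e1, e2, e3]; push_cast; ring
        · have e1 : ((-1 : ℝ)) ^ (r - p) = -1 := ho.neg_one_pow
          have e2 : (r - p) % 2 = 1 := Nat.odd_iff.mp ho
          have e3 : (r + 1 - p) % 2 = 0 := by omega
          rw [hpow, e1, e2, e3]; push_cast; ring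
    -- every point of the block folds into a segment of length m
    have hC2 : ∀ x ∈ Set.Icc (P.c ⟨p, hpn⟩) (P.c ⟨q, hqn'⟩),
        ∃ u, 0 ≤ u ∧ u ≤ m ∧
          P.foldMap x = P.foldMap (P.pt (p + 1)) + (-1 : ℝ) ^ (p + 1) * u := by
      rintro x ⟨hx1, hx2⟩
      rw [← P.pt_succ p hpn] at hx1
      rw [← P.pt_succ q hqn'] at hx2
      set r := Nat.findGreatest (fun r => P.pt (r + 1) ≤ x) q with hrdef
      have hrq : r ≤ q := Nat.findGreatest_le q
      have hrp : p ≤ r := Nat.le_findGreatest (by omega) hx1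
      have hrx : P.pt (r + 1) ≤ x := by
        have := Nat.findGreatest_spec (P := fun r => P.pt (r + 1) ≤ x)
          (by omega : p ≤ q) hx1
        rwa [← hrdef] at this
      have hxr : x ≤ P.pt (r + 2) := by
        rcases eq_or_lt_of_le hrq with he | hlt
        · have h1 : P.pt (q + 1) ≤ P.pt (q + 2) := P.pt_le_succ (q + 1) (by omega) hn
          rw [he]
          linarith
        · have hng := Nat.findGreatest_is_greatest (Nat.lt_succ_self r) (by omega)
          exact (not_le.mp hng).le
      have hfx := P.fold_on_seg (r + 1) (by omega) x hrx hxr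
      have hfr := P.fold_on_seg (r + 1) (by omega) (P.pt (r + 1)) le_rfl
        (P.pt_le_succ (r + 1) (by omega) hn)
      have hval := hC1 r hrp hrq
      have hstep : P.foldMap x = P.foldMap (P.pt (r + 1))
          + (-1 : ℝ) ^ (r + 1) * (x - P.pt (r + 1)) := by
        rw [hfx, hfr]; ring
      have ht0 : 0 ≤ x - P.pt (r + 1) := by linarith
      have hpow : ((-1 : ℝ)) ^ (r + 1) = (-1 : ℝ) ^ (p + 1) * (-1 : ℝ) ^ (r - p) := by
        rw [← pow_add]; congr 1; omega
      rcases eq_or_lt_of_le hrq with he | hlt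
      · have hrx' := hrx
        rw [he] at hrx'
        have ht' : x - P.pt (r + 1) = 0 := by rw [he]; linarith
        refine ⟨m * (((r - p) % 2 : ℕ) : ℝ), ?_, ?_, ?_⟩
        · have : (r - p) % 2 = 0 ∨ (r - p) % 2 = 1 := by omega
          rcases this with e | e <;> rw [e] <;> simp [hm0.le]
        · have : (r - p) % 2 = 0 ∨ (r - p) % 2 = 1 := by omega
          rcases this with e | e <;> rw [e] <;> simp [hm0.le]
        · rw [hstep, ht', hval]; ring
      · have htm : x - P.pt (r + 1) ≤ m := by
          have := (hblock r hrp hlt).2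
          simp only [hd] at this
          linarith
        rcases Nat.even_or_odd (r - p) with he' | ho'
        · refine ⟨x - P.pt (r + 1), ht0, htm, ?_⟩
          rw [hstep, hval, hpow, he'.neg_one_pow, Nat.even_iff.mp he']
          push_cast; ring
        · refine ⟨m - (x - P.pt (r + 1)), by linarith, by linarith, ?_⟩
          rw [hstep, hval, hpow, ho'.neg_one_pow, Nat.odd_iff.mp ho']
          push_cast; ring
    -- folded image of the far left endpoint
    have hfpt_p : P.foldMap (P.pt p) = P.foldMap (P.pt (p + 1))
        + (-1 : ℝ) ^ (p + 1) * (P.pt (p + 1) - P.pt p) := by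
      have hs := P.fold_step p (by omega) hn
      linear_combination (-1 : ℝ) * hs
    -- folded image of the far right endpoint
    have hfq2 : P.foldMap (P.pt (q + 2)) = P.foldMap (P.pt (q + 1))
        + (-1 : ℝ) ^ (q + 1) * (P.pt (q + 2) - P.pt (q + 1)) :=
      P.fold_step (q + 1) (by omega) hn
    have hsusp : P.Suspicious ⟨p, hpn⟩ ⟨q, hqn'⟩ := by
      refine ⟨Fin.le_def.mpr (by simp; omega), ?_, ?_⟩
      · rintro ⟨x, hx, hfx⟩
        obtain ⟨u, hu0, hum, hux⟩ := hC2 x hx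
        simp only [Fin.val_mk] at hfx
        rw [hux, hfpt_p] at hfx
        have : u = P.pt (p + 1) - P.pt p :=
          mul_left_cancel₀ hsne (by linarith)
        linarith
      · rintro ⟨x, hx, hfx⟩
        obtain ⟨u, hu0, hum, hux⟩ := hC2 x hx
        simp only [Fin.val_mk] at hfx
        rw [hux, hfq2, hC1 q (by omega) le_rfl] at hfx
        have hpow : ((-1 : ℝ)) ^ (q + 1) = (-1 : ℝ) ^ (p + 1) * (-1 : ℝ) ^ (q - p) := by
          rw [← pow_add]; congr 1; omega
        rcases Nat.even_or_odd (q - p) with he | ho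
        · rw [hpow, he.neg_one_pow, Nat.even_iff.mp he] at hfx
          push_cast at hfx
          have : u = P.pt (q + 2) - P.pt (q + 1) :=
            mul_left_cancel₀ hsne (by linear_combination hfx)
          linarith
        · rw [hpow, ho.neg_one_pow, Nat.odd_iff.mp ho] at hfx
          push_cast at hfx
          have : u = m - (P.pt (q + 2) - P.pt (q + 1)) :=
            mul_left_cancel₀ hsne (by linear_combination hfx)
          linarith
    obtain ⟨hI1, hI2⟩ := h ⟨p, hpn⟩ ⟨q, hqn'⟩ hsusp
    have hpair : ({(⟨p, hpn⟩ : Fin P.n), ⟨q, hqn'⟩} : Finset (Fin P.n)).card = 2 :=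
      Finset.card_pair (by simp [Fin.ext_iff]; omega)
    by_cases hb : a ⟨p, hpn⟩ = true
    · have hV : P.countV a ⟨p, hpn⟩ ⟨q, hqn'⟩ = 0 := by
        rw [CreasePattern1D.countV, Finset.card_eq_zero, Finset.filter_eq_empty_iff]
        rintro i - ⟨hi1, hi2, hi3⟩
        have hs := hsame (i : ℕ) (Fin.le_def.mp hi1) (Fin.le_def.mp hi2) i.isLt
        rw [Fin.eta] at hs
        rw [hs, hb] at hi3
        exact absurd hi3 (by simp)
      have hM : 2 ≤ P.countM a ⟨p, hpn⟩ ⟨q, hqn'⟩ := by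
        rw [CreasePattern1D.countM, ← hpair]
        apply Finset.card_le_card
        intro i hi
        simp only [Finset.mem_insert, Finset.mem_singleton] at hi
        simp only [Finset.mem_filter, Finset.mem_univ, true_and]
        rcases hi with rfl | rfl
        · exact ⟨le_refl _, Fin.le_def.mpr (by simp; omega), hb⟩
        · refine ⟨Fin.le_def.mpr (by simp; omega), le_refl _, ?_⟩
          rw [hsame q (by omega) le_rfl hqn']
          exact hb
      rw [hV] at hI1
      omega
    · have hb' : a ⟨p, hpn⟩ = false := by
        cases hab : a ⟨p, hpn⟩
        · rfl
        · exact absurd hab hb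
      have hM : P.countM a ⟨p, hpn⟩ ⟨q, hqn'⟩ = 0 := by
        rw [CreasePattern1D.countM, Finset.card_eq_zero, Finset.filter_eq_empty_iff]
        rintro i - ⟨hi1, hi2, hi3⟩
        have hs := hsame (i : ℕ) (Fin.le_def.mp hi1) (Fin.le_def.mp hi2) i.isLt
        rw [Fin.eta] at hs
        rw [hs, hb'] at hi3
        exact absurd hi3 (by simp)
      have hV : 2 ≤ P.countV a ⟨p, hpn⟩ ⟨q, hqn'⟩ := by
        rw [CreasePattern1D.countV, ← hpair]
        apply Finset.card_le_card
        intro i hi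
        simp only [Finset.mem_insert, Finset.mem_singleton] at hi
        simp only [Finset.mem_filter, Finset.mem_univ, true_and]
        rcases hi with rfl | rfl
        · exact ⟨le_refl _, Fin.le_def.mpr (by simp; omega), hb'⟩
        · refine ⟨Fin.le_def.mpr (by simp; omega), le_refl _, ?_⟩
          rw [hsame q (by omega) le_rfl hqn']
          exact hb'
      rw [hM] at hI2
      omega
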